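/- Let λ^ρ be strictly dominant with atypical entries λ^ρ_1 < … (indexed by the atypical roots β_1,…,β_r ordered by δ-index), and let (λ^ρ)^⇑ be obtained by replacing each atypical entry by the maximal atypical entry of its atypical component, where λ is piecewise disconnected. If μ^ρ is strictly dominant with the same typical entries as λ^ρ, then {σ ∈ Sym(r) : σ(μ^ρ) ⪯ λ^ρ and σ^{-1}(j)<σ^{-1}(k) whenever j<k and j∼k} = {σ ∈ Sym(r) : σ(μ^ρ) ⪯ (λ^ρ)^⇑ and σ^{-1}(j)<σ^{-1}(k) whenever j<k and j∼k}, where σ(μ^ρ) ⪯ ν means the i-th atypical entry of μ^ρ is ≤ the σ(i)-th atypical entry of ν for all i. -/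

import Mathlib

/-! ## Weight diagrams, cap diagrams and right paths (Brundan–Stroppel / Brundan),
as used in "A Weyl-type character formula for PDC modules of gl(m|n)". -/

/-- The symbols of a weight diagram: `∨`, `∧`, `×`, `∘`. -/
inductive Tag : Type
  | vee | wedge | ex | circ
  deriving DecidableEq

/-- A weight diagram: a function `ℤ → {∨,∧,×,∘}` with finitely many non-`∧` entries. -/
structure WDiag : Type where
  D : ℤ → Tag
  finite : {t : ℤ | D t ≠ Tag.wedge}.Finite

namespace WDiag

/-- The (finite) set of positions of `∨`'s. -/
noncomputable def veeFinset (W : WDiag) : Finset ℤ :=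
  W.finite.toFinset.filter (fun t => W.D t = Tag.vee)

/-- The position of the `i`-th `∨`, counted from the left starting with `i = 0`
(junk value if `i` is out of range). -/
noncomputable def nthVee (W : WDiag) (i : ℕ) : ℤ :=
  (W.veeFinset.sort (· ≤ ·)).getD i 0

/-- In the open interval `(p,q)` there are as many `∨`'s as `∧`'s. -/
def capBal (W : WDiag) (p q : ℤ) : Prop :=
  ((Finset.Ioo p q).filter (fun t => W.D t = Tag.vee)).card =
    ((Finset.Ioo p q).filter (fun t => W.D t = Tag.wedge)).card

/-- `(p,q)` is a cap of the cap diagram of `W`: `p` carries `∨`, `q` is the first `∧` to the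
right of `p` such that the `∨`'s and `∧`'s strictly between `p` and `q` pair off.  This
balance condition characterizes the matching obtained by processing the `∨`'s right to left,
joining each `∨` to the first unmarked `∧` to its right. -/
def IsCap (W : WDiag) (p q : ℤ) : Prop :=
  W.D p = Tag.vee ∧ W.D q = Tag.wedge ∧ p < q ∧ W.capBal p q ∧
    ∀ q', p < q' → q' < q → W.D q' = Tag.wedge → ¬ W.capBal p q'

/-- Cap `(p,q)` is nested (strictly) below cap `(p',q')`. -/
def CapBelow (p q p' q' : ℤ) : Prop := p' < p ∧ q < q'

/-- The diagram obtained by exchanging the `∨` at `p` with the `∧` at `q`. -/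
noncomputable def moveDiag (W : WDiag) (p q : ℤ) : WDiag where
  D := fun t => if t = p then Tag.wedge else if t = q then Tag.vee else W.D t
  finite := by
    classical
    refine Set.Finite.subset (W.finite.union (Set.toFinite {p, q})) ?_
    intro t ht
    by_cases h1 : t = p
    · exact Or.inr (by simp [h1])
    · by_cases h2 : t = q
      · exact Or.inr (by simp [h2])
      · left
        simpa [Set.mem_setOf_eq, h1, h2] using ht

/-- The right move `R_i` (as a relation): exchange the `i`-th `∨` (counted from the left,
`0`-based) with the `∧` to which it is joined by a cap. -/
def RMove (i : ℕ) (W W' : WDiag) : Prop :=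
  i < W.veeFinset.card ∧ ∃ q, W.IsCap (W.nthVee i) q ∧ W' = W.moveDiag (W.nthVee i) q

/-- `PathRel l W W'`: applying the right moves recorded in `l` (head first) turns `W`
into `W'`. -/
def PathRel : List ℕ → WDiag → WDiag → Prop
  | [], W, W' => W = W'
  | i :: l, W, W' => ∃ E, RMove i W E ∧ PathRel l E W'

/-- `l` is a right path from `W` to `W'`: a sequence of right moves
`R_{i₁} ∘ ⋯ ∘ R_{i_k}` with `i₁ ≤ … ≤ i_k`.  Since the composition is applied rightmost
factor first, the list of moves in order of application is weakly decreasing. -/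
def IsRightPath (W W' : WDiag) (l : List ℕ) : Prop :=
  l.Chain' (fun a b => b ≤ a) ∧ PathRel l W W'

/-- `W` and `W'` have the same typical entries (`×`'s and `∘`'s). -/
def SameTypical (W W' : WDiag) : Prop :=
  ∀ t, (W.D t = Tag.ex ↔ W'.D t = Tag.ex) ∧ (W.D t = Tag.circ ↔ W'.D t = Tag.circ)

/-- Totally connected: between any two `∨`'s there is no `∧`. -/
def TC (W : WDiag) : Prop :=
  ∀ p q t, W.D p = Tag.vee → W.D q = Tag.vee → p < t → t < q → W.D t ≠ Tag.wedge

/-- Totally disconnected: between any two `∨`'s there is at least one `∧`. -/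
def TDC (W : WDiag) : Prop :=
  ∀ p q, W.D p = Tag.vee → W.D q = Tag.vee → p < q → ∃ t, p < t ∧ t < q ∧ W.D t = Tag.wedge

/-- `[a,b]` is an atypical component: a maximal nonempty interval containing a `∨` and
no `∧` (maximality amounts to `∧`'s at the two positions just outside). -/
def IsComp (W : WDiag) (a b : ℤ) : Prop :=
  a ≤ b ∧ (∀ t ∈ Finset.Icc a b, W.D t ≠ Tag.wedge) ∧ (∃ t ∈ Finset.Icc a b, W.D t = Tag.vee)
    ∧ W.D (a - 1) = Tag.wedge ∧ W.D (b + 1) = Tag.wedge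

/-- Piecewise disconnected (PDC): for any two consecutive atypical components `T_i = [a,b]`,
`T_{i+1} = [a',b']` (no atypical component strictly between them), the number `t_i` of `∨`'s
in `T_i` is at most the number `s_i` of `∧`'s strictly between `T_i` and `T_{i+1}`. -/
def PDC (W : WDiag) : Prop :=
  ∀ a b a' b', W.IsComp a b → W.IsComp a' b' → b < a' →
    (∀ a'' b'', W.IsComp a'' b'' → ¬(b < a'' ∧ b'' < a')) →
    ((Finset.Icc a b).filter (fun t => W.D t = Tag.vee)).card ≤
      ((Finset.Ioo b a').filter (fun t => W.D t = Tag.wedge)).card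

/-- Positions `x` and `y` lie in the same atypical component: no `∧` in between
(inclusively). -/
def SameComp (W : WDiag) (x y : ℤ) : Prop :=
  ∀ t ∈ Finset.Icc (min x y) (max x y), W.D t ≠ Tag.wedge

/-- A labeled right move on a diagram with `r` labeled `∨`'s (the function `Fin r → ℤ`
records the current position of each labeled `∨`): the move `R_i` moves the label currently
occupying the position of the `i`-th `∨`. -/
def LMove (r : ℕ) (i : ℕ) (S S' : WDiag × (Fin r → ℤ)) : Prop :=
  ∃ (k : Fin r) (q : ℤ), S.2 k = S.1.nthVee i ∧ i < S.1.veeFinset.card ∧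
    S.1.IsCap (S.2 k) q ∧ S'.1 = S.1.moveDiag (S.2 k) q ∧ S'.2 = Function.update S.2 k q

/-- Labeled version of `PathRel`. -/
def LPathRel (r : ℕ) : List ℕ → WDiag × (Fin r → ℤ) → WDiag × (Fin r → ℤ) → Prop
  | [], S, S' => S = S'
  | i :: l, S, S' => ∃ E, LMove r i S E ∧ LPathRel r l E S'

/-- The path `l` from `Wmu` to `Wlam` induces the permutation `σ ∈ Tag(r)`: labeling the `∨`'s
of `Wmu` left to right by `0, …, r−1` and following them along the path, the `k`-th `∨` of
`Wmu` ends at the position of the `σ(k)`-th `∨` of `Wlam`. -/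
def Induces (r : ℕ) (Wmu Wlam : WDiag) (l : List ℕ) (σ : Equiv.Perm (Fin r)) : Prop :=
  ∃ f : Fin r → ℤ, LPathRel r l (Wmu, fun k => Wmu.nthVee k) (Wlam, f) ∧
    ∀ k : Fin r, f k = Wlam.nthVee (σ k)

end WDiag

/-- The weight diagram of a strictly dominant integral weight
`λ^ρ = Σ a_i ε_i − Σ b_j δ_j` of `gl(m|n)`:  put `∨` at `t` if `t ∈ {a_i} ∩ {b_j}`,
`×` if `t ∈ {a_i} ∖ {b_j}`, `∘` if `t ∈ {b_j} ∖ {a_i}`, and `∧` otherwise. -/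
noncomputable def wdOf {m n : ℕ} (a : Fin m → ℤ) (b : Fin n → ℤ) : WDiag := by
  classical
  refine ⟨fun t => if ∃ i, a i = t then (if ∃ j, b j = t then Tag.vee else Tag.ex)
      else (if ∃ j, b j = t then Tag.circ else Tag.wedge), ?_⟩
  refine Set.Finite.subset ((Set.finite_range a).union (Set.finite_range b)) ?_
  intro t ht
  by_cases hA : ∃ i, a i = t
  · exact Or.inl (by obtain ⟨i, hi⟩ := hA; exact ⟨i, hi⟩)
  · by_cases hB : ∃ j, b j = t
    · exact Or.inr (by obtain ⟨j, hj⟩ := hB; exact ⟨j, hj⟩)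
    · exact absurd (by simp [Set.mem_setOf_eq, hA, hB]) ht


namespace WDiag

lemma length_sort' (W : WDiag) : (W.veeFinset.sort (· ≤ ·)).length = W.veeFinset.card :=
  Finset.length_sort _

lemma nthVee_mem (W : WDiag) {i : ℕ} (h : i < W.veeFinset.card) : W.nthVee i ∈ W.veeFinset := by
  unfold nthVee
  rw [List.getD_eq_getElem _ _ (by rwa [W.length_sort'])]
  exact (Finset.mem_sort _).mp (List.getElem_mem _)

lemma mem_veeFinset {W : WDiag} {x : ℤ} : x ∈ W.veeFinset ↔ W.D x = Tag.vee := by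
  constructor
  · intro h
    exact (Finset.mem_filter.mp h).2
  · intro h
    refine Finset.mem_filter.mpr ⟨?_, h⟩
    rw [Set.Finite.mem_toFinset, Set.mem_setOf_eq, h]
    exact fun hc => nomatch hc

lemma D_nthVee (W : WDiag) {i : ℕ} (h : i < W.veeFinset.card) : W.D (W.nthVee i) = Tag.vee :=
  mem_veeFinset.mp (W.nthVee_mem h)

lemma nthVee_lt_nthVee (W : WDiag) {i j : ℕ} (hij : i < j) (hj : j < W.veeFinset.card) :
    W.nthVee i < W.nthVee j := by
  have hi : i < W.veeFinset.card := hij.trans hj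
  unfold nthVee
  rw [List.getD_eq_getElem _ _ (by rwa [W.length_sort']),
    List.getD_eq_getElem _ _ (by rwa [W.length_sort'])]
  exact (W.veeFinset.sortedLT_sort.getElem_lt_getElem_iff).mpr hij

lemma nthVee_le_nthVee (W : WDiag) {i j : ℕ} (hij : i ≤ j) (hj : j < W.veeFinset.card) :
    W.nthVee i ≤ W.nthVee j := by
  rcases hij.lt_or_eq with h | h
  · exact (W.nthVee_lt_nthVee h hj).le
  · rw [h]

lemma le_of_nthVee_le (W : WDiag) {i j : ℕ} (hi : i < W.veeFinset.card)
    (h : W.nthVee i ≤ W.nthVee j) : i ≤ j := by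
  by_contra hc
  exact absurd h (not_le.mpr (W.nthVee_lt_nthVee (not_le.mp hc) hi))

lemma lt_of_nthVee_lt (W : WDiag) {i j : ℕ} (hi : i < W.veeFinset.card)
    (h : W.nthVee i < W.nthVee j) : i < j := by
  by_contra hc
  exact absurd h (not_lt.mpr (W.nthVee_le_nthVee (not_lt.mp hc) hi))

lemma exists_nthVee (W : WDiag) {x : ℤ} (hx : x ∈ W.veeFinset) :
    ∃ i, i < W.veeFinset.card ∧ W.nthVee i = x := by
  have hx' : x ∈ W.veeFinset.sort (· ≤ ·) := (Finset.mem_sort _).mpr hx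
  obtain ⟨n, hn, hnx⟩ := List.mem_iff_getElem.mp hx'
  refine ⟨n, by rwa [W.length_sort'] at hn, ?_⟩
  unfold nthVee
  rw [List.getD_eq_getElem _ _ hn, hnx]

lemma sameComp_self (W : WDiag) {x : ℤ} (hx : W.D x ≠ Tag.wedge) : W.SameComp x x := by
  intro t ht
  simp only [min_self, max_self, Finset.mem_Icc] at ht
  have : t = x := le_antisymm ht.2 ht.1
  rwa [this]

lemma sameComp_of_le (W : WDiag) {x y : ℤ} (hxy : x ≤ y)
    (h : ∀ t, x ≤ t → t ≤ y → W.D t ≠ Tag.wedge) : W.SameComp x y := by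
  intro t ht
  rw [Finset.mem_Icc, min_eq_left hxy, max_eq_right hxy] at ht
  exact h t ht.1 ht.2

lemma sameComp_apply (W : WDiag) {x y : ℤ} (hxy : x ≤ y) (h : W.SameComp x y)
    {t : ℤ} (h1 : x ≤ t) (h2 : t ≤ y) : W.D t ≠ Tag.wedge :=
  h t (by rw [Finset.mem_Icc, min_eq_left hxy, max_eq_right hxy]; exact ⟨h1, h2⟩)

lemma sameComp_trans' (W : WDiag) {x y z : ℤ} (hxy : x ≤ y) (hyz : y ≤ z)
    (h1 : W.SameComp x y) (h2 : W.SameComp y z) : W.SameComp x z := by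
  refine W.sameComp_of_le (hxy.trans hyz) (fun t ht1 ht2 => ?_)
  rcases le_total t y with h | h
  · exact W.sameComp_apply hxy h1 ht1 h
  · exact W.sameComp_apply hyz h2 h ht2

end WDiag

open WDiag in
/-!
STATEMENT 11 (Lemma 4.7): `Wlam` is the weight diagram of a piecewise disconnected strictly
dominant `λ^ρ`, whose atypical entries are the positions `nthVee Wlam 0 < … < nthVee Wlam (r-1)`
of its `∨`'s, and `Wmu` the diagram of a strictly dominant `μ^ρ` with the same typical
entries, with atypical entries `nthVee Wmu i`.  The function `up : Fin r → ℤ` records the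
atypical entries of `(λ^ρ)^⇑`: `up i` is the maximal atypical entry in the atypical
component of the `i`-th atypical entry of `λ^ρ`.  Then the set of `σ ∈ Sym(r)` with
`σ(μ^ρ) ⪯ λ^ρ` and `σ⁻¹(j) < σ⁻¹(k)` for `j < k`, `j ∼ k`, coincides with the set of `σ`
with `σ(μ^ρ) ⪯ (λ^ρ)^⇑` and the same order condition; here `σ(μ^ρ) ⪯ ν` means that the
`i`-th atypical entry of `μ^ρ` is at most the `σ(i)`-th atypical entry of `ν` for all `i`.
-/
theorem stmt11 (r : ℕ) (Wmu Wlam : WDiag)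
    (hmu : Wmu.veeFinset.card = r) (hlam : Wlam.veeFinset.card = r)
    (htyp : WDiag.SameTypical Wmu Wlam) (hpdc : Wlam.PDC)
    (up : Fin r → ℤ)
    (hup : ∀ i : Fin r, ∃ k : Fin r, up i = Wlam.nthVee k ∧
      Wlam.SameComp (Wlam.nthVee i) (Wlam.nthVee k) ∧
      ∀ k' : Fin r, Wlam.SameComp (Wlam.nthVee i) (Wlam.nthVee k') →
        Wlam.nthVee k' ≤ up i) :
    {σ : Equiv.Perm (Fin r) |
        (∀ i : Fin r, Wmu.nthVee i ≤ Wlam.nthVee (σ i)) ∧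
        ∀ j k : Fin r, j < k → Wlam.SameComp (Wlam.nthVee j) (Wlam.nthVee k) →
          σ.symm j < σ.symm k} =
      {σ : Equiv.Perm (Fin r) |
        (∀ i : Fin r, Wmu.nthVee i ≤ up (σ i)) ∧
        ∀ j k : Fin r, j < k → Wlam.SameComp (Wlam.nthVee j) (Wlam.nthVee k) →
          σ.symm j < σ.symm k} := by
  classical
  ext σ
  simp only [Set.mem_setOf_eq]
  have hlt : ∀ t : Fin r, (t : ℕ) < Wlam.veeFinset.card := fun t => by rw [hlam]; exact t.isLt
  have hltmu : ∀ t : Fin r, (t : ℕ) < Wmu.veeFinset.card := fun t => by rw [hmu]; exact t.isLt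
  have hveeD : ∀ t : Fin r, Wlam.D (Wlam.nthVee t) = Tag.vee := fun t => Wlam.D_nthVee (hlt t)
  have hself : ∀ t : Fin r, Wlam.SameComp (Wlam.nthVee t) (Wlam.nthVee t) := fun t =>
    Wlam.sameComp_self (by rw [hveeD t]; exact fun hc => nomatch hc)
  constructor
  · rintro ⟨h1, h2⟩
    refine ⟨fun i => (h1 i).trans ?_, h2⟩
    obtain ⟨k, hk, hcomp, hmax⟩ := hup (σ i)
    exact hmax (σ i) (hself (σ i))
  · rintro ⟨h1, h2⟩
    refine ⟨fun i => ?_, h2⟩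
    obtain ⟨k, hk, hcomp, hmax⟩ := hup (σ i)
    set j : Fin r := σ i with hj
    have hjup : Wlam.nthVee j ≤ up j := hmax j (hself j)
    have hjk_pos : Wlam.nthVee j ≤ Wlam.nthVee k := by rw [← hk]; exact hjup
    have hjk : (j : ℕ) ≤ (k : ℕ) := Wlam.le_of_nthVee_le (hlt j) hjk_pos
    by_contra hcon
    push_neg at hcon
    -- positions of λ are monotone in the block
    have hmono : ∀ t : Fin r, (j : ℕ) ≤ t → (t : ℕ) ≤ k →
        Wlam.nthVee j ≤ Wlam.nthVee t ∧ Wlam.nthVee t ≤ Wlam.nthVee k := fun t h1' h2' =>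
      ⟨Wlam.nthVee_le_nthVee h1' (hlt t), Wlam.nthVee_le_nthVee h2' (hlt k)⟩
    have hcompjt : ∀ t : Fin r, (j : ℕ) ≤ t → (t : ℕ) ≤ k →
        Wlam.SameComp (Wlam.nthVee j) (Wlam.nthVee t) := fun t h1' h2' => by
      obtain ⟨ha, hb⟩ := hmono t h1' h2'
      exact Wlam.sameComp_of_le ha (fun s hs1 hs2 =>
        Wlam.sameComp_apply hjk_pos hcomp hs1 (hs2.trans hb))
    have huple : ∀ t : Fin r, (j : ℕ) ≤ t → (t : ℕ) ≤ k → up t ≤ up j := by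
      intro t h1' h2'
      obtain ⟨kt, hkt, hct, hmt⟩ := hup t
      have htu : Wlam.nthVee t ≤ up t := hmt t (hself t)
      have hcc : Wlam.SameComp (Wlam.nthVee j) (Wlam.nthVee kt) := by
        refine Wlam.sameComp_trans' (hmono t h1' h2').1 ?_ (hcompjt t h1' h2') ?_
        · rw [← hkt]; exact htu
        · exact hct
      have := hmax kt hcc
      rwa [← hkt] at this
    -- the moved vees of μ
    have hmuup : ∀ t : Fin r, Wmu.nthVee (σ.symm t) ≤ up t := fun t => by
      have := h1 (σ.symm t)
      rwa [Equiv.apply_symm_apply] at this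
    have hsymmj : σ.symm j = i := by rw [hj, Equiv.symm_apply_apply]
    set g : Fin r → ℤ := fun t => Wmu.nthVee (σ.symm t) with hg
    have hglb : ∀ t : Fin r, (j : ℕ) ≤ t → (t : ℕ) ≤ k → Wlam.nthVee j < g t := by
      intro t h1' h2'
      rcases eq_or_lt_of_le h1' with he | hlt'
      · have hjt : j = t := Fin.ext he
        rw [← hjt]
        show Wlam.nthVee ↑j < Wmu.nthVee ↑(σ.symm j)
        rw [hsymmj]
        exact hcon
      · have hjt : j < t := hlt'
        have := h2 j t hjt (hcompjt t h1' h2')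
        have hmu' : Wmu.nthVee (σ.symm j) ≤ Wmu.nthVee (σ.symm t) :=
          Wmu.nthVee_le_nthVee (le_of_lt this) (hltmu (σ.symm t))
        rw [hsymmj] at hmu'
        exact lt_of_lt_of_le hcon hmu'
    have hgub : ∀ t : Fin r, (j : ℕ) ≤ t → (t : ℕ) ≤ k → g t ≤ Wlam.nthVee k := by
      intro t h1' h2'
      calc g t ≤ up t := hmuup t
        _ ≤ up j := huple t h1' h2'
        _ = Wlam.nthVee k := hk
    -- pigeonhole
    have hmaps : ∀ t ∈ Finset.Icc j k, g t ∈ (Finset.Ioc j k).image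
        (fun s : Fin r => Wlam.nthVee s) := by
      intro t ht
      rw [Finset.mem_Icc] at ht
      have h1' : (j : ℕ) ≤ t := ht.1
      have h2' : (t : ℕ) ≤ k := ht.2
      have hlo := hglb t h1' h2'
      have hhi := hgub t h1' h2'
      have hmuvee : Wmu.D (g t) = Tag.vee := Wmu.D_nthVee (hltmu (σ.symm t))
      have hlamvee : Wlam.D (g t) = Tag.vee := by
        have hnw : Wlam.D (g t) ≠ Tag.wedge :=
          Wlam.sameComp_apply hjk_pos hcomp hlo.le hhi
        have hA := (htyp (g t)).1
        have hB := (htyp (g t)).2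
        cases hL : Wlam.D (g t) with
        | vee => rfl
        | wedge => exact absurd hL hnw
        | ex => rw [hA.mpr hL] at hmuvee; exact nomatch hmuvee
        | circ => rw [hB.mpr hL] at hmuvee; exact nomatch hmuvee
      obtain ⟨s, hs, hsx⟩ := Wlam.exists_nthVee (WDiag.mem_veeFinset.mpr hlamvee)
      rw [hlam] at hs
      have hjs : (j : ℕ) < s := Wlam.lt_of_nthVee_lt (hlt j) (by rw [hsx]; exact hlo)
      have hsk : s ≤ (k : ℕ) := Wlam.le_of_nthVee_le (by rw [hlam]; exact hs)
        (by rw [hsx]; exact hhi)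
      refine Finset.mem_image.mpr ⟨⟨s, hs⟩, Finset.mem_Ioc.mpr ⟨?_, ?_⟩, hsx⟩
      · exact hjs
      · exact hsk
    have hinj : Set.InjOn g (Finset.Icc j k : Finset (Fin r)) := by
      intro t1 _ t2 _ hgt
      have hc1 := hltmu (σ.symm t1)
      have hc2 := hltmu (σ.symm t2)
      have : ((σ.symm t1 : Fin r) : ℕ) = ((σ.symm t2 : Fin r) : ℕ) :=
        le_antisymm (Wmu.le_of_nthVee_le hc1 (le_of_eq hgt))
          (Wmu.le_of_nthVee_le hc2 (le_of_eq hgt.symm))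
      exact σ.symm.injective (Fin.ext this)
    have hcard := Finset.card_le_card_of_injOn g hmaps hinj
    have hcard2 : ((Finset.Ioc j k).image (fun s : Fin r => Wlam.nthVee s)).card ≤
        (Finset.Ioc j k).card := Finset.card_image_le
    rw [Fin.card_Icc] at hcard
    rw [Fin.card_Ioc] at hcard2
    omega
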